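/- For every p ∈ (0,1), the ratio of the signed curvature of the Brier loss prediction curve to that of the log loss prediction curve satisfies k_Brier(p)/k_ln(p) = 1/(2p(1−p)) ≥ 2, with equality if and only if p = 1/2; hence the infimum over p ∈ (0,1) of this ratio, which is the mixability constant of the Brier loss function, equals 2. -/

import Mathlib

open Set

lemma brier_aux (p : ℝ) (hp : p ∈ Ioo (0:ℝ) 1) :
    ((1/2) * (p ^ 2 + (1 - p) ^ 2) ^ (-(3:ℝ)/2)) /
        (p * (1 - p) / (p ^ 2 + (1 - p) ^ 2) ^ ((3:ℝ)/2)) =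
      1 / (2 * p * (1 - p)) ∧
    2 ≤ 1 / (2 * p * (1 - p)) ∧
    (1 / (2 * p * (1 - p)) = 2 ↔ p = 1/2) := by
  obtain ⟨hp0, hp1⟩ := hp
  have h1p : 0 < 1 - p := by linarith
  have hq : 0 < p ^ 2 + (1 - p) ^ 2 := by positivity
  have hpow : (0:ℝ) < (p ^ 2 + (1 - p) ^ 2) ^ ((3:ℝ)/2) := Real.rpow_pos_of_pos hq _
  have hneg : (p ^ 2 + (1 - p) ^ 2) ^ (-(3:ℝ)/2) =
      ((p ^ 2 + (1 - p) ^ 2) ^ ((3:ℝ)/2))⁻¹ := by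
    rw [← Real.rpow_neg hq.le]; ring_nf
  have hden : 0 < 2 * p * (1 - p) := by positivity
  refine ⟨?_, ?_, ?_⟩
  · rw [hneg]
    field_simp
  · rw [le_div_iff₀ hden]
    nlinarith [sq_nonneg (p - 1/2)]
  · rw [div_eq_iff hden.ne']
    constructor
    · intro h; nlinarith
    · intro h; rw [h]; norm_num

theorem brier_mixability_constant :
    (∀ p ∈ Ioo (0:ℝ) 1,
      ((1/2) * (p ^ 2 + (1 - p) ^ 2) ^ (-(3:ℝ)/2)) /
          (p * (1 - p) / (p ^ 2 + (1 - p) ^ 2) ^ ((3:ℝ)/2)) =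
        1 / (2 * p * (1 - p)) ∧
      2 ≤ 1 / (2 * p * (1 - p)) ∧
      (1 / (2 * p * (1 - p)) = 2 ↔ p = 1/2)) ∧
    sInf ((fun p : ℝ => 1 / (2 * p * (1 - p))) '' Ioo 0 1) = 2 := by
  refine ⟨brier_aux, ?_⟩
  have hmem : (2:ℝ) ∈ (fun p : ℝ => 1 / (2 * p * (1 - p))) '' Ioo 0 1 := by
    refine ⟨1/2, by norm_num, by norm_num⟩
  have hlb : ∀ x ∈ (fun p : ℝ => 1 / (2 * p * (1 - p))) '' Ioo 0 1, (2:ℝ) ≤ x := by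
    rintro x ⟨p, hp, rfl⟩
    exact (brier_aux p hp).2.1
  exact le_antisymm (csInf_le ⟨2, hlb⟩ hmem) (le_csInf ⟨2, hmem⟩ hlb)
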